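/- If H' is a Hopf subalgebra of a Hopf algebra H, then exp₀(H') divides exp₀(H) (with the convention that every positive integer divides ∞ and ∞ divides ∞). -/

import Mathlib

open TensorProduct

noncomputable section

variable (k H : Type*) [CommRing k] [Ring H] [Bialgebra k H]

/-- Convolution product `f * g = m ∘ (f ⊗ g) ∘ Δ` on linear endomorphisms. -/
def conv (f g : Module.End k H) : Module.End k H :=
  LinearMap.mul' k H ∘ₗ TensorProduct.map f g ∘ₗ Coalgebra.comul

/-- The convolution unit `u ∘ ε`. -/
def convOne : Module.End k H := (Algebra.linearMap k H) ∘ₗ Coalgebra.counit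

/-- `convSeq F n = m_n ∘ (F 0 ⊗ F 1 ⊗ ⋯ ⊗ F (n-1)) ∘ Δ_n` (as an iterated convolution). -/
def convSeq : (ℕ → Module.End k H) → ℕ → Module.End k H
  | _, 0 => convOne k H
  | F, n + 1 => conv k H (F 0) (convSeq (fun j => F (j + 1)) n)

/-- The `n`-th Sweedler power `[n] = m_n ∘ Δ_n` as a linear endomorphism. -/
def sweedlerPow (n : ℕ) : Module.End k H := convSeq k H (fun _ => LinearMap.id) n

/-- The twisted Sweedler power `m_n ∘ (id ⊗ T ⊗ T² ⊗ ⋯ ⊗ T^(n-1)) ∘ Δ_n`. -/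
def twistPow (T : Module.End k H) (n : ℕ) : Module.End k H :=
  convSeq k H (fun j => T ^ j) n

/-- `exp₀(H)`: the least `n ≥ 1` with `[n] = u ∘ ε`, in `ℕ ∪ {∞}` (`sInf ∅ = ∞`). -/
def exp0 : ℕ∞ :=
  sInf {e : ℕ∞ | ∃ n : ℕ, e = n ∧ 0 < n ∧ sweedlerPow k H n = convOne k H}

/-- The `T`-twisted exponent: least `n ≥ 1` with
`m_n ∘ (id ⊗ T ⊗ ⋯ ⊗ T^(n-1)) ∘ Δ_n = u ∘ ε`, in `ℕ ∪ {∞}`.  For `T = S⁻²` this is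
`exp(H)` and for `T = S^(2i)` this is the twisted exponent `exp_{2i}(H)`. -/
def expAt (T : Module.End k H) : ℕ∞ :=
  sInf {e : ℕ∞ | ∃ n : ℕ, e = n ∧ 0 < n ∧ twistPow k H T n = convOne k H}

section aux

variable {k H H' : Type*} [CommRing k] [Ring H] [Bialgebra k H]
  [Ring H'] [Bialgebra k H']

lemma sweedlerPow_succ (n : ℕ) :
    sweedlerPow k H (n + 1) = conv k H LinearMap.id (sweedlerPow k H n) := rfl

lemma sweedlerPow_shift {e : ℕ} (he : sweedlerPow k H e = convOne k H) :
    ∀ m, sweedlerPow k H (e + m) = sweedlerPow k H m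
  | 0 => he
  | m + 1 => by
    rw [show e + (m + 1) = (e + m) + 1 from rfl, sweedlerPow_succ,
      sweedlerPow_shift he m, sweedlerPow_succ]

lemma sweedlerPow_mul_add {e : ℕ} (he : sweedlerPow k H e = convOne k H) :
    ∀ q r, sweedlerPow k H (e * q + r) = sweedlerPow k H r
  | 0, r => by simp
  | q + 1, r => by
    rw [show e * (q + 1) + r = e + (e * q + r) by ring, sweedlerPow_shift he,
      sweedlerPow_mul_add he q r]

lemma comm_conv (f : H' →ₐc[k] H) {g g' : Module.End k H'} {G G' : Module.End k H}
    (hg : f.toLinearMap ∘ₗ g = G ∘ₗ f.toLinearMap)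
    (hg' : f.toLinearMap ∘ₗ g' = G' ∘ₗ f.toLinearMap) :
    f.toLinearMap ∘ₗ conv k H' g g' = conv k H G G' ∘ₗ f.toLinearMap := by
  have hmul : f.toLinearMap ∘ₗ LinearMap.mul' k H' =
      LinearMap.mul' k H ∘ₗ TensorProduct.map f.toLinearMap f.toLinearMap := by
    apply TensorProduct.ext'
    intro a b
    simp only [LinearMap.coe_comp, Function.comp_apply, TensorProduct.map_tmul,
      LinearMap.mul'_apply]
    exact map_mul f a b
  have hcomul : TensorProduct.map f.toLinearMap f.toLinearMap ∘ₗ Coalgebra.comul =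
      Coalgebra.comul ∘ₗ f.toLinearMap := CoalgHomClass.map_comp_comul f
  have hmap : TensorProduct.map f.toLinearMap f.toLinearMap ∘ₗ TensorProduct.map g g' =
      TensorProduct.map G G' ∘ₗ TensorProduct.map f.toLinearMap f.toLinearMap := by
    rw [← TensorProduct.map_comp, ← TensorProduct.map_comp, hg, hg']
  unfold conv
  calc f.toLinearMap ∘ₗ LinearMap.mul' k H' ∘ₗ TensorProduct.map g g' ∘ₗ Coalgebra.comul
      = (f.toLinearMap ∘ₗ LinearMap.mul' k H') ∘ₗ TensorProduct.map g g' ∘ₗ Coalgebra.comul := by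
        simp only [LinearMap.comp_assoc]
    _ = LinearMap.mul' k H ∘ₗ (TensorProduct.map f.toLinearMap f.toLinearMap ∘ₗ
          TensorProduct.map g g') ∘ₗ Coalgebra.comul := by
        rw [hmul]; simp only [LinearMap.comp_assoc]
    _ = LinearMap.mul' k H ∘ₗ TensorProduct.map G G' ∘ₗ
          TensorProduct.map f.toLinearMap f.toLinearMap ∘ₗ Coalgebra.comul := by
        rw [hmap]; simp only [LinearMap.comp_assoc]
    _ = LinearMap.mul' k H ∘ₗ TensorProduct.map G G' ∘ₗ Coalgebra.comul ∘ₗ f.toLinearMap := by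
        rw [hcomul]
    _ = (LinearMap.mul' k H ∘ₗ TensorProduct.map G G' ∘ₗ Coalgebra.comul) ∘ₗ f.toLinearMap := by
        simp only [LinearMap.comp_assoc]

lemma comm_convOne (f : H' →ₐc[k] H) :
    f.toLinearMap ∘ₗ convOne k H' = convOne k H ∘ₗ f.toLinearMap := by
  unfold convOne
  ext x
  simp [CoalgHomClass.counit_comp_apply, Algebra.algebraMap_eq_smul_one,
    show f.toCoalgHom (1 : H') = (1 : H) from map_one f]

lemma comm_sweedlerPow (f : H' →ₐc[k] H) :
    ∀ n, f.toLinearMap ∘ₗ sweedlerPow k H' n = sweedlerPow k H n ∘ₗ f.toLinearMap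
  | 0 => comm_convOne f
  | n + 1 => by
    rw [sweedlerPow_succ, sweedlerPow_succ]
    exact comm_conv f (by rfl) (comm_sweedlerPow f n)

end aux


lemma exp0_eq_coe_sInf {k H : Type*} [CommRing k] [Ring H] [Bialgebra k H]
    (hN : {n : ℕ | 0 < n ∧ sweedlerPow k H n = convOne k H}.Nonempty) :
    exp0 k H = (sInf {n : ℕ | 0 < n ∧ sweedlerPow k H n = convOne k H} : ℕ) := by
  rw [exp0]
  apply le_antisymm
  · have hmem : ((sInf {n : ℕ | 0 < n ∧ sweedlerPow k H n = convOne k H} : ℕ) : ℕ∞) ∈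
        {e : ℕ∞ | ∃ n : ℕ, e = n ∧ 0 < n ∧ sweedlerPow k H n = convOne k H} :=
      ⟨sInf {n : ℕ | 0 < n ∧ sweedlerPow k H n = convOne k H}, rfl,
        (Nat.sInf_mem hN).1, (Nat.sInf_mem hN).2⟩
    exact sInf_le hmem
  · apply le_sInf
    rintro e ⟨n, rfl, hn, hP⟩
    have h : sInf {n : ℕ | 0 < n ∧ sweedlerPow k H n = convOne k H} ≤ n :=
      Nat.sInf_le ⟨hn, hP⟩
    exact_mod_cast h

lemma exp0_eq_top {k H : Type*} [CommRing k] [Ring H] [Bialgebra k H]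
    (hN : ¬ ∃ n : ℕ, 0 < n ∧ sweedlerPow k H n = convOne k H) :
    exp0 k H = ⊤ := by
  rw [exp0, show {e : ℕ∞ | ∃ n : ℕ, e = n ∧ 0 < n ∧ sweedlerPow k H n = convOne k H} = ∅ by
    ext e; simp only [Set.mem_setOf_eq, Set.mem_empty_iff_false, iff_false]
    rintro ⟨n, rfl, hn, hP⟩; exact hN ⟨n, hn, hP⟩, sInf_empty]

/-- if `H'` is a Hopf subalgebra of `H` (realized by an injective bialgebra
morphism, which automatically preserves the antipode), then `exp₀(H') ∣ exp₀(H)` in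
`ℕ ∪ {∞}`. -/
theorem stmt3 (k H H' : Type*) [Field k] [Ring H] [HopfAlgebra k H]
    [Ring H'] [HopfAlgebra k H']
    (f : H' →ₐc[k] H) (hf : Function.Injective f) :
    exp0 k H' ∣ exp0 k H := by
  have htrans : ∀ n : ℕ, sweedlerPow k H n = convOne k H →
      sweedlerPow k H' n = convOne k H' := by
    intro n hn
    apply LinearMap.ext
    intro x
    apply hf
    have h1 := LinearMap.congr_fun (comm_sweedlerPow f n) x
    have h2 := LinearMap.congr_fun (comm_convOne f) x
    simp only [LinearMap.coe_comp, Function.comp_apply] at h1 h2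
    show f.toLinearMap (sweedlerPow k H' n x) = f.toLinearMap (convOne k H' x)
    rw [h1, h2, hn]
  set N' : Set ℕ := {n : ℕ | 0 < n ∧ sweedlerPow k H' n = convOne k H'} with hN'def
  by_cases hN : ∃ n : ℕ, 0 < n ∧ sweedlerPow k H n = convOne k H
  · -- exp0 H finite
    have hNE : {n : ℕ | 0 < n ∧ sweedlerPow k H n = convOne k H}.Nonempty := by
      obtain ⟨n, h1, h2⟩ := hN; exact ⟨n, h1, h2⟩
    set n₀ := sInf {n : ℕ | 0 < n ∧ sweedlerPow k H n = convOne k H} with hn₀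
    have hn₀mem := Nat.sInf_mem hNE
    have hn₀' : n₀ ∈ N' := ⟨hn₀mem.1, htrans n₀ hn₀mem.2⟩
    have hNE' : N'.Nonempty := ⟨n₀, hn₀'⟩
    have hemem := Nat.sInf_mem hNE'
    have hdvd : sInf N' ∣ n₀ := by
      have h := sweedlerPow_mul_add (k := k) (H := H') hemem.2 (n₀ / sInf N') (n₀ % sInf N')
      rw [Nat.div_add_mod] at h
      rcases Nat.eq_zero_or_pos (n₀ % sInf N') with h0 | hpos
      · exact Nat.dvd_of_mod_eq_zero h0
      · have hmem : n₀ % sInf N' ∈ N' := ⟨hpos, by rw [← h]; exact hn₀'.2⟩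
        have h1 := Nat.sInf_le hmem
        have h2 := Nat.mod_lt n₀ hemem.1
        omega
    rw [exp0_eq_coe_sInf hNE, exp0_eq_coe_sInf (k := k) (H := H') hNE', ← hN'def, ← hn₀]
    exact Nat.cast_dvd_cast hdvd
  · rw [exp0_eq_top hN]
    by_cases hN2 : ∃ n : ℕ, 0 < n ∧ sweedlerPow k H' n = convOne k H'
    · have hNE' : N'.Nonempty := by obtain ⟨n, h1, h2⟩ := hN2; exact ⟨n, h1, h2⟩
      rw [exp0_eq_coe_sInf (k := k) (H := H') hNE']
      refine ⟨⊤, ?_⟩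
      rw [ENat.mul_top]
      exact Nat.cast_ne_zero.mpr (Nat.sInf_mem hNE').1.ne'
    · rw [exp0_eq_top hN2]
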